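/- arXiv:0806.4247 — 4 statements merged into one kernel-verified Lean document; each statement's English description precedes it below -/
import Mathlib

section
/- Let C ∈ (0,1] and u = 2√C ∈ (0,2]. The cubic F(t) = (3C−1)t³ + 6Ct² + (9C−3C²)t + 4C − 2C² is nonnegative on the interval [0, u]. -/
/-- For `C ∈ (0,1]` and `u = 2√C`, the cubic
`F(t) = (3C−1)t³ + 6Ct² + (9C−3C²)t + 4C − 2C²` is nonnegative on `[0,u]`. -/
theorem cubic_nonneg (C : ℝ) (hC : C ∈ Set.Ioc (0 : ℝ) 1) (u : ℝ)
    (hu : u = 2 * Real.sqrt C) :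
    ∀ t ∈ Set.Icc (0 : ℝ) u,
      0 ≤ (3 * C - 1) * t ^ 3 + 6 * C * t ^ 2 + (9 * C - 3 * C ^ 2) * t
          + 4 * C - 2 * C ^ 2 := by
  obtain ⟨hC0, hC1⟩ := hC
  intro t ⟨ht0, htu⟩
  have hsq : t ^ 2 ≤ 4 * C := by
    have h := Real.sq_sqrt hC0.le
    nlinarith [mul_self_nonneg (t - 2 * Real.sqrt C), Real.sqrt_nonneg C]
  nlinarith [mul_nonneg ht0 (mul_nonneg ht0 ht0), mul_nonneg ht0 (sub_nonneg.2 hsq),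
    mul_nonneg (mul_nonneg hC0.le ht0) ht0, mul_nonneg hC0.le ht0,
    mul_nonneg (mul_nonneg hC0.le hC0.le) ht0, sq_nonneg t]
end

section
/- Fix u ∈ (0,2] and an integer m ≥ 1 and set C = u²/4. On the set Ω = {(ν₁,…,ν_m) ∈ ℝ^m : ν_α ≥ 0, ∑ ν_α = u}, the function f(ν) = ∑_α 2ν_α(1+ν_α)²/(3ν_α² + 4ν_α + C) attains its maximum at the barycenter, and sup_Ω f = 2(u+m)²/((3 + m²/4)u + 4m). -/
/-- Tangent-line inequality for the concave summand `t ↦ 2t(1+t)²/(3t²+4t+u²/4)`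
at the point `s`, valid for `t ∈ [0,u]`, `s ∈ (0,u]`, `u ∈ (0,2]`. -/
lemma tangent_line (u s t : ℝ) (hu0 : 0 < u) (hu2 : u ≤ 2) (hs0 : 0 < s)
    (hsu : s ≤ u) (ht0 : 0 ≤ t) (htu : t ≤ u) :
    2 * t * (1 + t) ^ 2 / (3 * t ^ 2 + 4 * t + u ^ 2 / 4) ≤
      2 * s * (1 + s) ^ 2 / (3 * s ^ 2 + 4 * s + u ^ 2 / 4) +
      ((2 * (1 + s) ^ 2 + 4 * s * (1 + s)) * (3 * s ^ 2 + 4 * s + u ^ 2 / 4)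
        - 2 * s * (1 + s) ^ 2 * (6 * s + 4)) / (3 * s ^ 2 + 4 * s + u ^ 2 / 4) ^ 2
        * (t - s) := by
  set C : ℝ := u ^ 2 / 4 with hC
  have hC0 : 0 < C := by positivity
  have hC1 : C ≤ 1 := by rw [hC]; nlinarith
  have hDt : 0 < 3 * t ^ 2 + 4 * t + C := by positivity
  have hDs : 0 < 3 * s ^ 2 + 4 * s + C := by positivity
  rw [← sub_nonneg]
  have key : 2 * s * (1 + s) ^ 2 / (3 * s ^ 2 + 4 * s + C) +
      ((2 * (1 + s) ^ 2 + 4 * s * (1 + s)) * (3 * s ^ 2 + 4 * s + C)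
        - 2 * s * (1 + s) ^ 2 * (6 * s + 4)) / (3 * s ^ 2 + 4 * s + C) ^ 2 * (t - s)
      - 2 * t * (1 + t) ^ 2 / (3 * t ^ 2 + 4 * t + C)
      = (t - s) ^ 2 *
        ((6 * C - 2 * C ^ 2 + 8 * s * C - 2 * s ^ 2 + 6 * s ^ 2 * C) * t
          + (8 * C - 4 * C ^ 2 + 12 * s * C - 4 * s * C ^ 2 + 4 * s ^ 2 * C)) /
        ((3 * t ^ 2 + 4 * t + C) * (3 * s ^ 2 + 4 * s + C) ^ 2) := by
    field_simp
    ring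
  rw [key]
  have hQ : 0 ≤ (6 * C - 2 * C ^ 2 + 8 * s * C - 2 * s ^ 2 + 6 * s ^ 2 * C) * t
      + (8 * C - 4 * C ^ 2 + 12 * s * C - 4 * s * C ^ 2 + 4 * s ^ 2 * C) := by
    have h1 : 0 ≤ 2 * C * (2 - C * t) := by nlinarith
    have h2 : 0 ≤ 2 * s * (4 * C - s * t) := by
      have hst : s * t ≤ u * u := mul_le_mul hsu htu ht0 hu0.le
      have h4C : 4 * C = u * u := by rw [hC]; ring
      nlinarith
    have h3 : 0 ≤ 4 * C * (1 - C) := by nlinarith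
    have h4 : 0 ≤ 4 * s * C * (1 - C) := by nlinarith
    have h5 : 0 ≤ 6 * C * t + 8 * s * C * t + 6 * s ^ 2 * C * t + 4 * s ^ 2 * C := by
      positivity
    have hid : (6 * C - 2 * C ^ 2 + 8 * s * C - 2 * s ^ 2 + 6 * s ^ 2 * C) * t
        + (8 * C - 4 * C ^ 2 + 12 * s * C - 4 * s * C ^ 2 + 4 * s ^ 2 * C)
        = 2 * C * (2 - C * t) + 2 * s * (4 * C - s * t) + 4 * C * (1 - C)
          + 4 * s * C * (1 - C)
          + (6 * C * t + 8 * s * C * t + 6 * s ^ 2 * C * t + 4 * s ^ 2 * C) := by ring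
    rw [hid]
    linarith
  exact div_nonneg (mul_nonneg (sq_nonneg _) hQ) (by positivity)

open Finset in
/-- On the simplex `{ν : ν_α ≥ 0, ∑ ν_α = u}` with `u ∈ (0,2]` and `C = u²/4`,
the function `ν ↦ ∑ 2ν_α(1+ν_α)²/(3ν_α²+4ν_α+C)` attains its maximum
`2(u+m)²/((3+m²/4)u+4m)` (at the barycenter). -/
theorem simplex_max_rational {m : ℕ} (hm : 1 ≤ m) (u : ℝ)
    (hu : u ∈ Set.Ioc (0 : ℝ) 2) :
    IsGreatest
      ((fun ν : Fin m → ℝ =>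
          ∑ α, 2 * ν α * (1 + ν α) ^ 2 / (3 * ν α ^ 2 + 4 * ν α + u ^ 2 / 4)) ''
        {ν | (∀ α, 0 ≤ ν α) ∧ ∑ α, ν α = u})
      (2 * (u + m) ^ 2 / ((3 + (m : ℝ) ^ 2 / 4) * u + 4 * m)) := by
  obtain ⟨hu0, hu2⟩ := hu
  have hm0 : (0 : ℝ) < m := by exact_mod_cast Nat.lt_of_lt_of_le Nat.zero_lt_one hm
  set s : ℝ := u / m with hs
  have hs0 : 0 < s := by positivity
  have hsu : s ≤ u := by
    rw [hs, div_le_iff₀ hm0]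
    nlinarith [hm0, hu0, (by exact_mod_cast hm : (1:ℝ) ≤ m)]
  have hDs : 0 < 3 * s ^ 2 + 4 * s + u ^ 2 / 4 := by positivity
  have hDen : 0 < (3 + (m : ℝ) ^ 2 / 4) * u + 4 * m := by positivity
  -- value of the barycenter
  have hval : (m : ℝ) * (2 * s * (1 + s) ^ 2 / (3 * s ^ 2 + 4 * s + u ^ 2 / 4))
      = 2 * (u + m) ^ 2 / ((3 + (m : ℝ) ^ 2 / 4) * u + 4 * m) := by
    rw [hs]
    field_simp
    ring
  have hms : (m : ℝ) * s = u := by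
    rw [hs]; field_simp
  constructor
  · refine ⟨fun _ => s, ⟨fun α => le_of_lt hs0, ?_⟩, ?_⟩
    · rw [Finset.sum_const, Finset.card_univ, Fintype.card_fin, nsmul_eq_mul, hms]
    · simp only [Finset.sum_const, Finset.card_univ, Fintype.card_fin, nsmul_eq_mul]
      exact hval
  · rintro x ⟨ν, ⟨hpos, hsum⟩, rfl⟩
    have hν_le : ∀ α, ν α ≤ u := by
      intro α
      rw [← hsum]
      exact Finset.single_le_sum (fun i _ => hpos i) (Finset.mem_univ α)
    set A : ℝ := ((2 * (1 + s) ^ 2 + 4 * s * (1 + s)) * (3 * s ^ 2 + 4 * s + u ^ 2 / 4)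
        - 2 * s * (1 + s) ^ 2 * (6 * s + 4)) / (3 * s ^ 2 + 4 * s + u ^ 2 / 4) ^ 2 with hA
    have step : ∀ α, 2 * ν α * (1 + ν α) ^ 2 / (3 * ν α ^ 2 + 4 * ν α + u ^ 2 / 4)
        ≤ 2 * s * (1 + s) ^ 2 / (3 * s ^ 2 + 4 * s + u ^ 2 / 4) + A * (ν α - s) := by
      intro α
      exact tangent_line u s (ν α) hu0 hu2 hs0 hsu (hpos α) (hν_le α)
    calc ∑ α, 2 * ν α * (1 + ν α) ^ 2 / (3 * ν α ^ 2 + 4 * ν α + u ^ 2 / 4)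
        ≤ ∑ α, (2 * s * (1 + s) ^ 2 / (3 * s ^ 2 + 4 * s + u ^ 2 / 4) + A * (ν α - s)) :=
          Finset.sum_le_sum (fun α _ => step α)
      _ = (m : ℝ) * (2 * s * (1 + s) ^ 2 / (3 * s ^ 2 + 4 * s + u ^ 2 / 4))
            + A * (u - m * s) := by
          rw [Finset.sum_add_distrib, Finset.sum_const, Finset.card_univ, Fintype.card_fin,
            ← Finset.mul_sum, Finset.sum_sub_distrib, hsum, Finset.sum_const,
            Finset.card_univ, Fintype.card_fin, nsmul_eq_mul, nsmul_eq_mul]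
      _ = 2 * (u + m) ^ 2 / ((3 + (m : ℝ) ^ 2 / 4) * u + 4 * m) := by
          rw [hms, sub_self, mul_zero, add_zero, hval]
end

section
/- Let λ₁,…,λ_m ≥ 0 and v = ∏_α(1+λ_α²)^{1/2} with v ∈ (1, 2]. Then ∑_α λ_α²/(v − 1 + λ_α²) ≤ m(v^{2/m} − 1)/(v − 2 + v^{2/m}). -/
open Finset in
/-- If `λ_α ≥ 0` and `v = ∏ (1+λ_α²)^{1/2} ∈ (1,2]`, then
`∑ λ_α²/(v−1+λ_α²) ≤ m(v^{2/m}−1)/(v−2+v^{2/m})`. -/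
theorem sum_bound_v {m : ℕ} (lam : Fin m → ℝ) (hlam : ∀ α, 0 ≤ lam α)
    (v : ℝ) (hv : v = Real.sqrt (∏ α, (1 + lam α ^ 2)))
    (hv' : v ∈ Set.Ioc (1 : ℝ) 2) :
    ∑ α, lam α ^ 2 / (v - 1 + lam α ^ 2) ≤
      (m : ℝ) * (v ^ ((2 : ℝ) / m) - 1) / (v - 2 + v ^ ((2 : ℝ) / m)) := by
  obtain ⟨hv1, hv2⟩ := hv'
  have hm : 0 < m := by
    by_contra h
    push_neg at h
    interval_cases m
    simp [Real.sqrt_one] at hv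
    rw [hv] at hv1
    exact lt_irrefl _ hv1
  have hmR : (0 : ℝ) < m := by exact_mod_cast hm
  have hfacpos : ∀ α : Fin m, (0 : ℝ) < 1 + lam α ^ 2 := fun α => by positivity
  have hvpos : (0 : ℝ) < v := by linarith
  have hvsq : v ^ 2 = ∏ α, (1 + lam α ^ 2) := by
    rw [hv, Real.sq_sqrt (Finset.prod_nonneg fun α _ => (hfacpos α).le)]
  set a : ℝ := v - 2 with ha
  have ha1 : a ≤ 0 := by linarith
  have ha2 : a ^ 2 ≤ 1 := by nlinarith
  set g : ℝ → ℝ := fun t => 1 - (v - 1) / (Real.exp t + a) with hg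
  have hden : ∀ t : ℝ, 0 ≤ t → 0 < Real.exp t + a := fun t ht => by
    have := Real.one_le_exp ht; linarith
  have hderiv : ∀ t : ℝ, 0 ≤ t →
      HasDerivAt g ((v - 1) * Real.exp t / (Real.exp t + a) ^ 2) t := by
    intro t ht
    have h1 : HasDerivAt (fun t => Real.exp t + a) (Real.exp t) t :=
      (Real.hasDerivAt_exp t).add_const a
    have h2 : HasDerivAt (fun t => (v - 1) / (Real.exp t + a))
        ((0 * (Real.exp t + a) - (v - 1) * Real.exp t) / (Real.exp t + a) ^ 2) t :=
      (hasDerivAt_const t (v - 1)).div h1 (hden t ht).ne'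
    have h3 := (hasDerivAt_const t (1 : ℝ)).sub h2
    convert h3 using 1
    · rfl
    · rfl
    · rfl
    ring
  have hconc : ConcaveOn ℝ (Set.Ici 0) g := by
    apply AntitoneOn.concaveOn_of_deriv (convex_Ici 0)
    · intro t ht
      exact (hderiv t ht).continuousAt.continuousWithinAt
    · rw [interior_Ici]
      intro t ht
      exact (hderiv t (le_of_lt ht)).differentiableAt.differentiableWithinAt
    · rw [interior_Ici]
      intro x hx y hy hxy
      rw [(hderiv x (le_of_lt hx)).deriv, (hderiv y (le_of_lt hy)).deriv]
      have hex : (1 : ℝ) ≤ Real.exp x := Real.one_le_exp (le_of_lt hx)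
      have hexy : Real.exp x ≤ Real.exp y := Real.exp_le_exp.mpr hxy
      have hdx : (0 : ℝ) < Real.exp x + a := hden x (le_of_lt hx)
      have hdy : (0 : ℝ) < Real.exp y + a := hden y (le_of_lt hy)
      rw [div_le_div_iff₀ (by positivity) (by positivity)]
      have h1 : (1 : ℝ) ≤ Real.exp x * Real.exp y := by nlinarith
      have key : 0 ≤ (v - 1) * ((Real.exp y - Real.exp x) * (Real.exp x * Real.exp y - a ^ 2)) :=
        mul_nonneg (by linarith) (mul_nonneg (by linarith) (by linarith))
      nlinarith [key]
  set t : Fin m → ℝ := fun α => Real.log (1 + lam α ^ 2) with hT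
  have htnn : ∀ α, 0 ≤ t α := fun α =>
    Real.log_nonneg (by nlinarith [sq_nonneg (lam α)])
  have hsumt : ∑ α, t α = 2 * Real.log v := by
    rw [hT]
    rw [← Real.log_prod (fun α _ => (hfacpos α).ne'), ← hvsq, Real.log_pow]
    push_cast; ring
  have hjensen := hconc.le_map_sum (t := Finset.univ) (w := fun _ : Fin m => (1 : ℝ) / m)
    (p := t) (fun i _ => by positivity)
    (by simp [Finset.sum_const]; field_simp) (fun i _ => htnn i)
  simp only [smul_eq_mul] at hjensen
  have hmean : ∑ α, (1 : ℝ) / m * t α = (2 : ℝ) / m * Real.log v := by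
    rw [← Finset.mul_sum, hsumt]; ring
  rw [hmean] at hjensen
  -- identify g (t α)
  have hgt : ∀ α, g (t α) = lam α ^ 2 / (v - 1 + lam α ^ 2) := by
    intro α
    have : Real.exp (t α) = 1 + lam α ^ 2 := Real.exp_log (hfacpos α)
    have hpos : (0 : ℝ) < v - 1 + lam α ^ 2 := by nlinarith [sq_nonneg (lam α)]
    rw [hg]
    simp only [this]
    rw [show (1 : ℝ) + lam α ^ 2 + a = v - 1 + lam α ^ 2 by rw [ha]; ring]
    field_simp
    ring
  -- identify g at the mean
  set u : ℝ := v ^ ((2 : ℝ) / m) with hu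
  have hexpu : Real.exp ((2 : ℝ) / m * Real.log v) = u := by
    rw [hu, Real.rpow_def_of_pos hvpos, mul_comm]
  have hu1 : (1 : ℝ) ≤ u := by
    rw [← hexpu]
    exact Real.one_le_exp (mul_nonneg (by positivity) (Real.log_nonneg hv1.le))
  have hupos : (0 : ℝ) < u + a := by linarith
  have hgm : g ((2 : ℝ) / m * Real.log v) = (u - 1) / (u + a) := by
    rw [hg]
    simp only [hexpu]
    field_simp
    rw [ha]; ring
  rw [hgm] at hjensen
  have hsum : ∑ α, lam α ^ 2 / (v - 1 + lam α ^ 2) = ∑ α, g (t α) := by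
    exact Finset.sum_congr rfl fun α _ => (hgt α).symm
  rw [hsum]
  have hfinal : ∑ α, g (t α) ≤ (m : ℝ) * ((u - 1) / (u + a)) := by
    have := mul_le_mul_of_nonneg_left hjensen (le_of_lt hmR)
    calc ∑ α, g (t α) = (m : ℝ) * ∑ α, (1 : ℝ) / m * g (t α) := by
          rw [Finset.mul_sum]
          refine Finset.sum_congr rfl fun α _ => ?_
          field_simp
      _ ≤ (m : ℝ) * ((u - 1) / (u + a)) := this
  refine hfinal.trans_eq ?_
  rw [ha, ← mul_div_assoc, add_comm (v - 2) u]
end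

section
/- Let λ₁,…,λ_m ≥ 0 and u = ∑_α λ_α² with u ∈ (0,2]. Then ∑_α 2λ_α²(1+λ_α²)²/(3λ_α⁴ + 4λ_α² + u²/4) ≤ 2(u+m)²/((3 + m²/4)u + 4m). -/
set_option maxHeartbeats 1000000 in
/-- Tangent-line bound for `h(ν) = 2ν(1+ν)²/(3ν²+4ν+u²/4)` at `t`. -/
lemma tangent_bound (u t ν : ℝ) (ht : 0 < t) (htu : t ≤ u) (hu2 : u ≤ 2)
    (hν : 0 ≤ ν) (hνu : ν ≤ u) :
    2 * ν * (1 + ν) ^ 2 / (3 * ν ^ 2 + 4 * ν + u ^ 2 / 4) ≤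
      2 * t * (1 + t) ^ 2 / (3 * t ^ 2 + 4 * t + u ^ 2 / 4) +
      2 * (1 + t) * (3 * t ^ 3 + 5 * t ^ 2 + u ^ 2 / 4 * (1 + 3 * t)) /
        (3 * t ^ 2 + 4 * t + u ^ 2 / 4) ^ 2 * (ν - t) := by
  have hu : 0 < u := lt_of_lt_of_le ht htu
  set c := u ^ 2 / 4 with hc
  have hcpos : 0 < c := by positivity
  have hc1 : c ≤ 1 := by rw [hc]; nlinarith
  have hcu : u ^ 2 = 4 * c := by rw [hc]; ring
  have hDν : 0 < 3 * ν ^ 2 + 4 * ν + c := by positivity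
  have hDt : 0 < 3 * t ^ 2 + 4 * t + c := by positivity
  have key : (2 * t * (1 + t) ^ 2 / (3 * t ^ 2 + 4 * t + c) +
      2 * (1 + t) * (3 * t ^ 3 + 5 * t ^ 2 + c * (1 + 3 * t)) /
        (3 * t ^ 2 + 4 * t + c) ^ 2 * (ν - t)) -
      2 * ν * (1 + ν) ^ 2 / (3 * ν ^ 2 + 4 * ν + c) =
      (ν - t) ^ 2 *
        ((-2 * t ^ 2 + 6 * c + 8 * c * t + 6 * c * t ^ 2 - 2 * c ^ 2) * ν +
          4 * c * (t ^ 2 + 3 * t + 2 - c - c * t)) /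
        ((3 * ν ^ 2 + 4 * ν + c) * (3 * t ^ 2 + 4 * t + c) ^ 2) := by
    field_simp
    ring
  have hνt : ν * t ≤ 4 * c := by
    have h := mul_le_mul hνu htu ht.le hu.le
    nlinarith
  have hnum : 0 ≤ (-2 * t ^ 2 + 6 * c + 8 * c * t + 6 * c * t ^ 2 - 2 * c ^ 2) * ν +
      4 * c * (t ^ 2 + 3 * t + 2 - c - c * t) := by
    nlinarith [mul_nonneg ht.le (by linarith : (0:ℝ) ≤ 4 * c - ν * t),
      mul_nonneg (mul_nonneg hcpos.le hν) (by linarith : (0:ℝ) ≤ 1 - c),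
      mul_nonneg hcpos.le (by linarith : (0:ℝ) ≤ 1 - c),
      mul_nonneg (mul_nonneg hcpos.le ht.le) (by linarith : (0:ℝ) ≤ 1 - c),
      mul_nonneg (mul_nonneg hcpos.le hν) ht.le,
      mul_nonneg (mul_nonneg (mul_nonneg hcpos.le hν) ht.le) ht.le,
      mul_nonneg hcpos.le (mul_nonneg ht.le ht.le),
      mul_nonneg (mul_nonneg hcpos.le hν) (le_of_lt hcpos)]
  have hpos : 0 ≤ (ν - t) ^ 2 *
        ((-2 * t ^ 2 + 6 * c + 8 * c * t + 6 * c * t ^ 2 - 2 * c ^ 2) * ν +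
          4 * c * (t ^ 2 + 3 * t + 2 - c - c * t)) /
        ((3 * ν ^ 2 + 4 * ν + c) * (3 * t ^ 2 + 4 * t + c) ^ 2) := by
    apply div_nonneg (mul_nonneg (sq_nonneg _) hnum)
    positivity
  rw [← key] at hpos
  linarith

open Finset in
/-- If `λ_α ≥ 0` and `u = ∑ λ_α² ∈ (0,2]`, then
`∑ 2λ_α²(1+λ_α²)²/(3λ_α⁴+4λ_α²+u²/4) ≤ 2(u+m)²/((3+m²/4)u+4m)`. -/
theorem sum_bound_u {m : ℕ} (lam : Fin m → ℝ) (hlam : ∀ α, 0 ≤ lam α)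
    (u : ℝ) (hu : u = ∑ α, lam α ^ 2) (hu' : u ∈ Set.Ioc (0 : ℝ) 2) :
    ∑ α, 2 * lam α ^ 2 * (1 + lam α ^ 2) ^ 2 /
        (3 * lam α ^ 4 + 4 * lam α ^ 2 + u ^ 2 / 4) ≤
      2 * (u + m) ^ 2 / ((3 + (m : ℝ) ^ 2 / 4) * u + 4 * m) := by
  obtain ⟨hu0, hu2⟩ := hu'
  have hm : 0 < m := by
    rcases Nat.eq_zero_or_pos m with h | h
    · subst h; simp at hu; exact absurd (hu ▸ hu0) (lt_irrefl 0)
    · exact h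
  have hmR : (0 : ℝ) < m := Nat.cast_pos.mpr hm
  have h1m : (1 : ℝ) ≤ m := Nat.one_le_cast.mpr hm
  set t : ℝ := u / m with htdef
  have ht : 0 < t := div_pos hu0 hmR
  have htu : t ≤ u := by
    rw [htdef, div_le_iff₀ hmR]; nlinarith
  have hνu : ∀ α, lam α ^ 2 ≤ u := by
    intro α
    rw [hu]
    exact Finset.single_le_sum (fun i _ => sq_nonneg (lam i)) (Finset.mem_univ α)
  have step : ∀ α, 2 * lam α ^ 2 * (1 + lam α ^ 2) ^ 2 /
        (3 * lam α ^ 4 + 4 * lam α ^ 2 + u ^ 2 / 4) ≤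
      2 * t * (1 + t) ^ 2 / (3 * t ^ 2 + 4 * t + u ^ 2 / 4) +
      2 * (1 + t) * (3 * t ^ 3 + 5 * t ^ 2 + u ^ 2 / 4 * (1 + 3 * t)) /
        (3 * t ^ 2 + 4 * t + u ^ 2 / 4) ^ 2 * (lam α ^ 2 - t) := by
    intro α
    have h := tangent_bound u t (lam α ^ 2) ht htu hu2 (sq_nonneg _) (hνu α)
    have hrw : lam α ^ 4 = (lam α ^ 2) ^ 2 := by ring
    rw [hrw]
    convert h using 3 <;> ring
  have hsum := Finset.sum_le_sum (s := Finset.univ) (fun α _ => step α)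
  refine le_trans hsum ?_
  have hsum2 : ∑ α : Fin m, (2 * t * (1 + t) ^ 2 / (3 * t ^ 2 + 4 * t + u ^ 2 / 4) +
      2 * (1 + t) * (3 * t ^ 3 + 5 * t ^ 2 + u ^ 2 / 4 * (1 + 3 * t)) /
        (3 * t ^ 2 + 4 * t + u ^ 2 / 4) ^ 2 * (lam α ^ 2 - t)) =
      m * (2 * t * (1 + t) ^ 2 / (3 * t ^ 2 + 4 * t + u ^ 2 / 4)) := by
    rw [Finset.sum_add_distrib, Finset.sum_const, Finset.card_univ, Fintype.card_fin]
    rw [← Finset.mul_sum, Finset.sum_sub_distrib, ← hu, Finset.sum_const,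
      Finset.card_univ, Fintype.card_fin]
    simp only [nsmul_eq_mul]
    rw [htdef]
    field_simp
    ring
  rw [hsum2]
  have hDt : (3 * t ^ 2 + 4 * t + u ^ 2 / 4) ≠ 0 := by positivity
  have hDen : ((3 + (m : ℝ) ^ 2 / 4) * u + 4 * m) ≠ 0 := by positivity
  have heq : (m : ℝ) * (2 * t * (1 + t) ^ 2 / (3 * t ^ 2 + 4 * t + u ^ 2 / 4)) =
      2 * (u + m) ^ 2 / ((3 + (m : ℝ) ^ 2 / 4) * u + 4 * m) := by
    rw [htdef] at hDt ⊢
    field_simp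
    ring
  rw [heq]
end
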